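/- Let n ∈ ℕ and let F_n be the family of (n+1)(n+2)/2 functions θ ↦ cos^{k}θ sin^{K-k}θ/(k!(K-k)!) for 0 ≤ k ≤ K ≤ n. For any N_p points θ₁,…,θ_{N_p} ∈ ℝ, the matrix A ∈ ℂ^{((n+1)(n+2)/2) × N_p} with entries A_{il} = f_i(θ_l) has rank at most 2n+1. -/
import Mathlib


open Finset Complex in
lemma key14 (n K k : ℕ) (hk : k ≤ K) (hK : K ≤ n) (t : ℝ) :
    (Real.cos t : ℂ)^k * (Real.sin t : ℂ)^(K-k) / ((k.factorial : ℂ) * ((K-k).factorial : ℂ)) =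
    ∑ m ∈ Finset.range (2*n+1),
      (∑ a ∈ Finset.range (k+1), ∑ b ∈ Finset.range ((K-k)+1),
        if 2*(a+b)+n = m + K then
          ((-1:ℂ)^(b+(K-k)) * (k.choose a) * ((K-k).choose b)) /
            (2^k * (2*Complex.I)^(K-k) * (k.factorial) * ((K-k).factorial)) else 0)
        * Complex.exp (((m:ℂ) - (n:ℂ)) * Complex.I * (t:ℂ)) := by
  set j := K - k with hj
  have hkj : k + j = K := by omega
  set z := Complex.exp (t * Complex.I) with hz
  set w := Complex.exp (-t * Complex.I) with hw
  have hcos : (Real.cos t : ℂ) = (z + w)/2 := by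
    rw [Complex.ofReal_cos]; simp [Complex.cos, hz, hw]
  have hsin : (Real.sin t : ℂ) = (z - w)/(2*Complex.I) := by
    rw [Complex.ofReal_sin]
    simp only [Complex.sin, hz, hw]
    field_simp
    ring_nf
    simp [Complex.I_sq]
  set E : ℕ → ℂ := fun m => Complex.exp (((m:ℂ) - (n:ℂ)) * Complex.I * (t:ℂ)) with hE
  set c : ℕ → ℕ → ℂ := fun a b =>
    ((-1:ℂ)^(b+j) * (k.choose a) * (j.choose b)) /
      (2^k * (2*Complex.I)^j * (k.factorial) * (j.factorial)) with hc
  have hR : ∑ m ∈ Finset.range (2*n+1),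
      (∑ a ∈ Finset.range (k+1), ∑ b ∈ Finset.range (j+1),
        if 2*(a+b)+n = m + K then c a b else 0) * E m
      = ∑ a ∈ Finset.range (k+1), ∑ b ∈ Finset.range (j+1), c a b * E (2*(a+b)+n-K) := by
    simp only [Finset.sum_mul, ite_mul, zero_mul]
    rw [Finset.sum_comm]
    refine Finset.sum_congr rfl fun a ha => ?_
    rw [Finset.sum_comm]
    refine Finset.sum_congr rfl fun b hb => ?_
    have ha' : a ≤ k := Finset.mem_range_succ_iff.mp ha
    have hb' : b ≤ j := Finset.mem_range_succ_iff.mp hb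
    have step : ∀ m ∈ Finset.range (2*n+1),
        (if 2*(a+b)+n = m + K then c a b * E m else 0)
        = if m = 2*(a+b)+n-K then c a b * E m else 0 := by
      intro m hm
      split_ifs with h1 h2 h2 <;> first | rfl | omega
    rw [Finset.sum_congr rfl step, Finset.sum_ite_eq' (Finset.range (2*n+1)), if_pos]
    exact Finset.mem_range.mpr (by omega)
  rw [hR, hcos, hsin, div_pow, div_pow,
    (Commute.all z w).add_pow, sub_pow, div_mul_div_comm, div_div, Finset.sum_mul_sum]
  simp only [Finset.sum_div]
  refine Finset.sum_congr rfl fun a ha => Finset.sum_congr rfl fun b hb => ?_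
  have ha' : a ≤ k := Finset.mem_range_succ_iff.mp ha
  have hb' : b ≤ j := Finset.mem_range_succ_iff.mp hb
  have hEq : z^(a+b) * w^(K-(a+b)) = E (2*(a+b)+n-K) := by
    rw [hE]
    simp only [hz, hw, ← Complex.exp_nat_mul, ← Complex.exp_add]
    congr 1
    have h1 : ((2*(a+b)+n-K : ℕ) : ℂ) = 2*(a+b) + n - K := by
      push_cast [Nat.cast_sub (show K ≤ 2*(a+b)+n by omega)]; ring
    have h2 : ((K-(a+b) : ℕ) : ℂ) = K - (a+b) := by
      push_cast [Nat.cast_sub (show a+b ≤ K by omega)]; ring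
    rw [h1, h2]; push_cast; ring
  have hzw : z^a * w^(k-a) * (z^b * w^(j-b)) = z^(a+b) * w^(K-(a+b)) := by
    have h3 : K-(a+b) = (k-a)+(j-b) := by omega
    rw [h3, pow_add, pow_add]; ring
  rw [← hEq, hc, ← hzw]
  ring


/-- The matrix of values `f(θ_l)` of the `(n+1)(n+2)/2` normalized trigonometric
monomials `θ ↦ cosᵏθ sin^{K-k}θ/(k!(K-k)!)`, `0 ≤ k ≤ K ≤ n` (rows indexed by pairs
`(K,k)`), at arbitrary points `θ₁,…,θ_{N_p} ∈ ℝ`, has rank at most `2n+1`. -/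
theorem stmt14 (n Np : ℕ) (θ : Fin Np → ℝ)
    (A : Matrix ((K : Fin (n + 1)) × Fin (K.val + 1)) (Fin Np) ℂ)
    (hA : ∀ (r : (K : Fin (n + 1)) × Fin (K.val + 1)) (l : Fin Np),
      A r l = (Real.cos (θ l) : ℂ) ^ (r.2 : ℕ) * (Real.sin (θ l) : ℂ) ^ ((r.1 : ℕ) - (r.2 : ℕ)) /
        ((Nat.factorial (r.2 : ℕ) : ℂ) * (Nat.factorial ((r.1 : ℕ) - (r.2 : ℕ)) : ℂ))) :
    A.rank ≤ 2 * n + 1 := by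
  classical
  set B : Matrix ((K : Fin (n + 1)) × Fin (K.val + 1)) (Fin (2*n+1)) ℂ := fun r m =>
    ∑ a ∈ Finset.range ((r.2:ℕ)+1), ∑ b ∈ Finset.range (((r.1:ℕ)-(r.2:ℕ))+1),
      if 2*(a+b)+n = (m:ℕ) + (r.1:ℕ) then
        ((-1:ℂ)^(b+((r.1:ℕ)-(r.2:ℕ))) * ((r.2:ℕ).choose a) * (((r.1:ℕ)-(r.2:ℕ)).choose b)) /
          (2^(r.2:ℕ) * (2*Complex.I)^((r.1:ℕ)-(r.2:ℕ)) * ((r.2:ℕ).factorial)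
            * (((r.1:ℕ)-(r.2:ℕ)).factorial)) else 0
    with hB
  set C : Matrix (Fin (2*n+1)) (Fin Np) ℂ := fun m l =>
    Complex.exp ((((m:ℕ):ℂ) - (n:ℂ)) * Complex.I * (θ l : ℂ)) with hC
  have hfact : A = B * C := by
    ext r l
    rw [hA, Matrix.mul_apply, key14 n (r.1:ℕ) (r.2:ℕ)
      (Nat.lt_succ_iff.mp r.2.isLt) (Nat.lt_succ_iff.mp r.1.isLt) (θ l)]
    rw [← Fin.sum_univ_eq_sum_range (fun m =>
      (∑ a ∈ Finset.range ((r.2:ℕ)+1), ∑ b ∈ Finset.range (((r.1:ℕ)-(r.2:ℕ))+1),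
        if 2*(a+b)+n = m + (r.1:ℕ) then
          ((-1:ℂ)^(b+((r.1:ℕ)-(r.2:ℕ))) * ((r.2:ℕ).choose a) * (((r.1:ℕ)-(r.2:ℕ)).choose b)) /
            (2^(r.2:ℕ) * (2*Complex.I)^((r.1:ℕ)-(r.2:ℕ)) * ((r.2:ℕ).factorial)
              * (((r.1:ℕ)-(r.2:ℕ)).factorial)) else 0)
        * Complex.exp (((m:ℂ) - (n:ℂ)) * Complex.I * (θ l : ℂ))) (2*n+1)]
  rw [hfact]
  calc (B * C).rank ≤ C.rank := Matrix.rank_mul_le_right B C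
    _ ≤ Fintype.card (Fin (2*n+1)) := Matrix.rank_le_card_height C
    _ = 2*n+1 := by simp
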